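/- arXiv:2601.17539 — 4 statements merged into one kernel-verified Lean document; each statement's English description precedes it below -/
import Mathlib

section
/- Let r ≥ 1 and N ≥ 2 be integers, let z = (z_1,…,z_r) ∈ ℂ^r with |z_i| ≤ 1 for all i, and let (s_1,…,s_r) ∈ ℂ^r with Re(s_j) > 1 for every 1 ≤ j ≤ r. Then Σ_{N>n_1>⋯>n_r>0} z_1^{n_1}⋯z_r^{n_r}/(n_1^{s_1}⋯n_r^{s_r}) = Σ_{i=0}^{r} (−1)^i · Li*_{(z_i,…,z_1)}(s_i,…,s_1)_{≥N} · Li_{(z_{i+1},…,z_r)}(s_{i+1},…,s_r), where all the infinite series appearing on the right-hand side converge absolutely, the i = 0 term is Li_z(s_1,…,s_r), and the i = r term is (−1)^r Li*_{(z_r,…,z_1)}(s_r,…,s_1)_{≥N}. -/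
open scoped Classical
open Filter Topology

/-- Partial sum `Li_{(w_1,…,w_m)}(s_1,…,s_m)_{<N}` (weights and exponents given by the first
`m` values of functions on `ℕ`). -/
noncomputable def liPartialN (m : ℕ) (w s : ℕ → ℂ) (N : ℕ) : ℂ :=
  ∑ n ∈ (Fintype.piFinset fun _ : Fin m => Finset.range N).filter
      (fun n => (∀ a b : Fin m, a < b → n b < n a) ∧ ∀ a, 0 < n a),
    ∏ t : Fin m, w (t : ℕ) ^ n t / (n t : ℂ) ^ s (t : ℕ)

/-- The multiple polylogarithm `Li_{(w_1,…,w_m)}(s_1,…,s_m)` as an unconditional sum. -/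
noncomputable def liSumN (m : ℕ) (w s : ℕ → ℂ) : ℂ :=
  ∑' n : Fin m → ℕ,
    if (∀ a b : Fin m, a < b → n b < n a) ∧ (∀ a, 0 < n a) then
      ∏ t : Fin m, w (t : ℕ) ^ n t / (n t : ℂ) ^ s (t : ℕ)
    else 0

/-- Tail of the multiple polylogarithm-star series `Li*_{(w_1,…,w_m)}(s_1,…,s_m)_{≥N}`. -/
noncomputable def liStarTailN (m : ℕ) (w s : ℕ → ℂ) (N : ℕ) : ℂ :=
  ∑' n : Fin m → ℕ,
    if (∀ a b : Fin m, a ≤ b → n b ≤ n a) ∧ (∀ a, N ≤ n a) then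
      ∏ t : Fin m, w (t : ℕ) ^ n t / (n t : ℂ) ^ s (t : ℕ)
    else 0

def condT (r N i : ℕ) (m : Fin r → ℕ) : Prop :=
  (∀ a b : Fin r, (a : ℕ) < i → (b : ℕ) < i → a ≤ b → m a ≤ m b) ∧
  (∀ a : Fin r, (a : ℕ) < i → N ≤ m a) ∧
  (∀ a b : Fin r, i ≤ (a : ℕ) → a < b → m b < m a) ∧
  (∀ a : Fin r, i ≤ (a : ℕ) → 0 < m a)

def blockEquiv (i j r : ℕ) (h : i + j = r) :
    ((Fin i → ℕ) × (Fin j → ℕ)) ≃ (Fin r → ℕ) where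
  toFun p := fun t => if ht : (t : ℕ) < i then p.1 ⟨t, ht⟩ else p.2 ⟨(t : ℕ) - i, by omega⟩
  invFun m := (fun a => m ⟨a, by omega⟩, fun b => m ⟨i + (b : ℕ), by omega⟩)
  left_inv p := by
    refine Prod.ext ?_ ?_
    · funext a
      simp only [a.isLt, dif_pos]
    · funext b
      have hb : ¬ ((i + (b : ℕ)) < i) := by omega
      simp only [hb, dif_neg, not_false_iff]
      exact congrArg p.2 (Fin.ext (by change i + (b:ℕ) - i = (b:ℕ); omega))
  right_inv m := by
    funext t
    by_cases ht : (t : ℕ) < i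
    · simp only [ht, dif_pos]
    · simp only [ht, dif_neg, not_false_iff]
      exact congrArg m (Fin.ext (by change i + ((t:ℕ) - i) = (t:ℕ); omega))

set_option maxHeartbeats 1000000 in
lemma aux_summable_pi_prod : ∀ (m : ℕ) (F : ℕ → ℕ → ℝ), (∀ t n, 0 ≤ F t n) →
    (∀ t, t < m → Summable (F t)) →
    Summable (fun f : Fin m → ℕ => ∏ t : Fin m, F (t : ℕ) (f t)) := by
  intro m
  induction m with
  | zero =>
      intro F _ _
      exact Summable.of_finite
  | succ m ih =>
      intro F hF0 hFS
      have h2 : Summable (fun g : Fin m → ℕ => ∏ t : Fin m, F ((t : ℕ) + 1) (g t)) :=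
        ih (fun t => F (t + 1)) (fun t n => hF0 _ _) (fun t ht => hFS (t + 1) (by omega))
      have h1 : Summable (fun x : ℕ × (Fin m → ℕ) =>
          F 0 x.1 * ∏ t : Fin m, F ((t : ℕ) + 1) (x.2 t)) :=
        Summable.mul_of_nonneg (f := F 0) (g := fun g : Fin m → ℕ => ∏ t : Fin m, F ((t : ℕ) + 1) (g t)) (hFS 0 (Nat.succ_pos m)) h2
          (fun n => hF0 0 n) (fun f => Finset.prod_nonneg fun t _ => hF0 _ _)
      refine (Equiv.summable_iff (Fin.consEquiv fun _ : Fin (m + 1) => ℕ)).1 ?_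
      refine h1.congr fun x => ?_
      simp [Function.comp, Fin.consEquiv, Fin.prod_univ_succ]

lemma aux_norm_term_le {z s : ℂ} (hz : ‖z‖ ≤ 1) {n : ℕ} (hn : 0 < n) :
    ‖z ^ n / (n : ℂ) ^ s‖ ≤ (n : ℝ) ^ (-s.re) := by
  have hn' : (0:ℝ) < n := by exact_mod_cast hn
  have hns : ‖(n:ℂ) ^ s‖ = (n:ℝ) ^ s.re := by
    rw [show ((n:ℂ)) = ((n:ℝ):ℂ) by push_cast; ring]
    exact Complex.norm_cpow_eq_rpow_re_of_pos hn' s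
  rw [norm_div, norm_pow, hns, Real.rpow_neg hn'.le, div_eq_mul_inv]
  have h1 : ‖z‖ ^ n ≤ 1 := pow_le_one₀ (norm_nonneg z) hz
  have h2 : (0:ℝ) ≤ ((n:ℝ) ^ s.re)⁻¹ := by positivity
  calc ‖z‖ ^ n * ((n:ℝ) ^ s.re)⁻¹ ≤ 1 * ((n:ℝ) ^ s.re)⁻¹ := by
        exact mul_le_mul_of_nonneg_right h1 h2
    _ = ((n:ℝ) ^ s.re)⁻¹ := one_mul _

lemma aux_summable_if (m : ℕ) (w s : ℕ → ℂ) (hw : ∀ t, t < m → ‖w t‖ ≤ 1)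
    (hs : ∀ t, t < m → 1 < (s t).re) (Q : (Fin m → ℕ) → Prop) [DecidablePred Q]
    (hQ : ∀ n, Q n → ∀ t, 0 < n t) :
    Summable (fun n : Fin m → ℕ =>
      ‖if Q n then ∏ t : Fin m, w (t : ℕ) ^ n t / (n t : ℂ) ^ s (t : ℕ) else 0‖) := by
  have hG : Summable (fun f : Fin m → ℕ =>
      ∏ t : Fin m, ((f t : ℝ)) ^ (-(s (t:ℕ)).re)) :=
    aux_summable_pi_prod m (fun t n => (n:ℝ) ^ (-(s t).re))
      (fun t n => Real.rpow_nonneg (Nat.cast_nonneg n) _)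
      (fun t ht => Real.summable_nat_rpow.2 (by have := hs t ht; linarith))
  refine Summable.of_nonneg_of_le (fun n => norm_nonneg _) (fun n => ?_) hG
  by_cases hq : Q n
  · rw [if_pos hq, norm_prod]
    refine Finset.prod_le_prod (fun t _ => norm_nonneg _) (fun t _ => ?_)
    exact aux_norm_term_le (hw t t.isLt) (hQ n hq t)
  · rw [if_neg hq, norm_zero]
    exact Finset.prod_nonneg fun t _ => by positivity

lemma aux_starTail_eq (i N : ℕ) (z s : ℕ → ℂ) :
    liStarTailN i (fun t => z (i - 1 - t)) (fun t => s (i - 1 - t)) N =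
    ∑' n : Fin i → ℕ,
      if (∀ a b : Fin i, a ≤ b → n a ≤ n b) ∧ (∀ a, N ≤ n a) then
        ∏ t : Fin i, z (t : ℕ) ^ n t / (n t : ℂ) ^ s (t : ℕ)
      else 0 := by
  rw [liStarTailN]
  rw [← Equiv.tsum_eq (Equiv.arrowCongr Fin.revPerm (Equiv.refl ℕ))]
  refine tsum_congr fun n => ?_
  have happ : ∀ t : Fin i,
      (Equiv.arrowCongr Fin.revPerm (Equiv.refl ℕ)) n t = n (Fin.rev t) := by
    intro t; simp [Equiv.arrowCongr, Fin.revPerm]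
  have hval : ∀ t : Fin i, ((Fin.rev t : Fin i) : ℕ) = i - 1 - (t : ℕ) := by
    intro t; rw [Fin.val_rev]; omega
  by_cases hc : (∀ a b : Fin i, a ≤ b → n a ≤ n b) ∧ (∀ a, N ≤ n a)
  · have hc' : (∀ a b : Fin i,
        a ≤ b → (Equiv.arrowCongr Fin.revPerm (Equiv.refl ℕ)) n b
          ≤ (Equiv.arrowCongr Fin.revPerm (Equiv.refl ℕ)) n a) ∧
        (∀ a, N ≤ (Equiv.arrowCongr Fin.revPerm (Equiv.refl ℕ)) n a) := by
      constructor
      · intro a b hab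
        rw [happ a, happ b]
        exact hc.1 _ _ (Fin.rev_le_rev.mpr hab)
      · intro a; rw [happ a]; exact hc.2 _
    rw [if_pos hc', if_pos hc]
    refine Fintype.prod_equiv Fin.revPerm _ _ fun t => ?_
    rw [happ t]
    have h1 : i - 1 - ((t : Fin i) : ℕ) = ((Fin.rev t : Fin i) : ℕ) := (hval t).symm
    rw [show (Fin.revPerm t : Fin i) = Fin.rev t from rfl]
    simp only [h1]
  · have hc' : ¬ ((∀ a b : Fin i,
        a ≤ b → (Equiv.arrowCongr Fin.revPerm (Equiv.refl ℕ)) n b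
          ≤ (Equiv.arrowCongr Fin.revPerm (Equiv.refl ℕ)) n a) ∧
        (∀ a, N ≤ (Equiv.arrowCongr Fin.revPerm (Equiv.refl ℕ)) n a)) := by
      intro hcc
      refine hc ⟨fun a b hab => ?_, fun a => ?_⟩
      · have := hcc.1 (Fin.rev b) (Fin.rev a) (Fin.rev_le_rev.mpr hab)
        rw [happ, happ, Fin.rev_rev, Fin.rev_rev] at this
        exact this
      · have := hcc.2 (Fin.rev a)
        rw [happ, Fin.rev_rev] at this
        exact this
    rw [if_neg hc', if_neg hc]

lemma aux_ite_mul_ite {P Q : Prop} [Decidable P] [Decidable Q] (x y : ℂ) :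
    (if P then x else 0) * (if Q then y else 0) = if P ∧ Q then x * y else 0 := by
  by_cases hP : P <;> by_cases hQ : Q <;> simp [hP, hQ]

lemma aux_factorize (i j r : ℕ) (h : i + j = r) (N : ℕ) (hN : 2 ≤ N) (z s : ℕ → ℂ)
    (hz : ∀ t, t < r → ‖z t‖ ≤ 1) (hs : ∀ t, t < r → 1 < (s t).re) :
    (∑' m : Fin r → ℕ, if condT r N i m
        then ∏ t : Fin r, z (t : ℕ) ^ m t / (m t : ℂ) ^ s (t : ℕ) else 0) =
    liStarTailN i (fun t => z (i - 1 - t)) (fun t => s (i - 1 - t)) N *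
      liSumN j (fun t => z (i + t)) (fun t => s (i + t)) := by
  classical
  have hA : Summable (fun n : Fin i → ℕ =>
      ‖if (∀ a b : Fin i, a ≤ b → n a ≤ n b) ∧ (∀ a, N ≤ n a) then
          ∏ t : Fin i, z (t : ℕ) ^ n t / (n t : ℂ) ^ s (t : ℕ) else 0‖) :=
    aux_summable_if i z s (fun t ht => hz t (by omega)) (fun t ht => hs t (by omega))
      (fun n => (∀ a b : Fin i, a ≤ b → n a ≤ n b) ∧ (∀ a, N ≤ n a))
      (fun n hn t => by have := hn.2 t; omega)
  have hB : Summable (fun n : Fin j → ℕ =>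
      ‖if (∀ a b : Fin j, a < b → n b < n a) ∧ (∀ a, 0 < n a) then
          ∏ t : Fin j, z (i + (t : ℕ)) ^ n t / (n t : ℂ) ^ s (i + (t : ℕ)) else 0‖) :=
    aux_summable_if j (fun t => z (i + t)) (fun t => s (i + t))
      (fun t ht => hz _ (by omega)) (fun t ht => hs _ (by omega))
      (fun n => (∀ a b : Fin j, a < b → n b < n a) ∧ (∀ a, 0 < n a))
      (fun n hn t => hn.2 t)
  have hstar : liStarTailN i (fun t => z (i - 1 - t)) (fun t => s (i - 1 - t)) N =
      ∑' n : Fin i → ℕ,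
        if (∀ a b : Fin i, a ≤ b → n a ≤ n b) ∧ (∀ a, N ≤ n a) then
          ∏ t : Fin i, z (t : ℕ) ^ n t / (n t : ℂ) ^ s (t : ℕ) else 0 :=
    aux_starTail_eq i N z s
  have hsum : liSumN j (fun t => z (i + t)) (fun t => s (i + t)) =
      ∑' n : Fin j → ℕ,
        if (∀ a b : Fin j, a < b → n b < n a) ∧ (∀ a, 0 < n a) then
          ∏ t : Fin j, z (i + (t : ℕ)) ^ n t / (n t : ℂ) ^ s (i + (t : ℕ)) else 0 := rfl
  rw [hstar, hsum, tsum_mul_tsum_of_summable_norm hA hB,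
    ← Equiv.tsum_eq (blockEquiv i j r h).symm]
  refine tsum_congr fun m => ?_
  have hm1 : ∀ a : Fin i, ((blockEquiv i j r h).symm m).1 a = m ⟨(a : ℕ), by omega⟩ :=
    fun a => rfl
  have hm2 : ∀ b : Fin j, ((blockEquiv i j r h).symm m).2 b = m ⟨i + (b : ℕ), by omega⟩ :=
    fun b => rfl
  rw [aux_ite_mul_ite]
  have e1 : ∀ (t : Fin r) (ht : i ≤ (t : ℕ)),
      (⟨i + ((t : ℕ) - i), by omega⟩ : Fin r) = t :=
    fun t ht => Fin.ext (by change i + ((t : ℕ) - i) = (t : ℕ); omega)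
  have hiff : condT r N i m ↔
      ((∀ a b : Fin i, a ≤ b → ((blockEquiv i j r h).symm m).1 a ≤ ((blockEquiv i j r h).symm m).1 b) ∧
        (∀ a, N ≤ ((blockEquiv i j r h).symm m).1 a)) ∧
      ((∀ a b : Fin j, a < b → ((blockEquiv i j r h).symm m).2 b < ((blockEquiv i j r h).symm m).2 a) ∧
        (∀ a, 0 < ((blockEquiv i j r h).symm m).2 a)) := by
    constructor
    · rintro ⟨c1, c2, c3, c4⟩
      refine ⟨⟨fun a b hab => ?_, fun a => ?_⟩, fun a b hab => ?_, fun a => ?_⟩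
      · exact c1 ⟨a, by omega⟩ ⟨b, by omega⟩ a.isLt b.isLt hab
      · exact c2 ⟨a, by omega⟩ a.isLt
      · exact c3 ⟨i + (a : ℕ), by omega⟩ ⟨i + (b : ℕ), by omega⟩ (Nat.le_add_right i a)
          (Fin.mk_lt_mk.mpr (by omega))
      · exact c4 ⟨i + (a : ℕ), by omega⟩ (Nat.le_add_right i a)
    · rintro ⟨⟨d1, d2⟩, d3, d4⟩
      refine ⟨fun a b ha hb hab => ?_, fun a ha => ?_, fun a b ha hab => ?_, fun a ha => ?_⟩
      · exact d1 ⟨(a : ℕ), ha⟩ ⟨(b : ℕ), hb⟩ hab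
      · exact d2 ⟨(a : ℕ), ha⟩
      · have hb : i ≤ (b : ℕ) := by
          have : (a : ℕ) < (b : ℕ) := hab
          omega
        have hd := d3 ⟨(a : ℕ) - i, by omega⟩ ⟨(b : ℕ) - i, by omega⟩
          (Fin.mk_lt_mk.mpr (by have : (a : ℕ) < (b : ℕ) := hab; omega))
        rw [hm2, hm2] at hd
        rw [e1 a ha, e1 b hb] at hd
        exact hd
      · have hd := d4 ⟨(a : ℕ) - i, by omega⟩
        rw [hm2] at hd
        rw [e1 a ha] at hd
        exact hd
  have hprod : (∏ t : Fin r, z (t : ℕ) ^ m t / (m t : ℂ) ^ s (t : ℕ)) =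
      (∏ t : Fin i, z (t : ℕ) ^ ((blockEquiv i j r h).symm m).1 t
          / ((((blockEquiv i j r h).symm m).1 t : ℕ) : ℂ) ^ s (t : ℕ)) *
      (∏ t : Fin j, z (i + (t : ℕ)) ^ ((blockEquiv i j r h).symm m).2 t
          / ((((blockEquiv i j r h).symm m).2 t : ℕ) : ℂ) ^ s (i + (t : ℕ))) := by
    have e0 : (∏ t : Fin r, z (t : ℕ) ^ m t / (m t : ℂ) ^ s (t : ℕ)) =
        ∏ t : Fin (i + j), z ((finCongr h t : Fin r) : ℕ) ^ m (finCongr h t)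
          / ((m (finCongr h t) : ℕ) : ℂ) ^ s ((finCongr h t : Fin r) : ℕ) :=
      (Fintype.prod_equiv (finCongr h) _ _ (fun t => rfl)).symm
    rw [e0, Fin.prod_univ_add]
    refine congrArg₂ (· * ·) (Finset.prod_congr rfl fun a _ => ?_)
      (Finset.prod_congr rfl fun b _ => ?_)
    · have hv : ((finCongr h (Fin.castAdd j a) : Fin r) : ℕ) = (a : ℕ) := by simp
      have hmm : m (finCongr h (Fin.castAdd j a)) = ((blockEquiv i j r h).symm m).1 a := by
        rw [hm1]
        exact congrArg m (Fin.ext hv)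
      rw [hv, hmm]
    · have hv : ((finCongr h (Fin.natAdd i b) : Fin r) : ℕ) = i + (b : ℕ) := by simp
      have hmm : m (finCongr h (Fin.natAdd i b)) = ((blockEquiv i j r h).symm m).2 b := by
        rw [hm2]
        exact congrArg m (Fin.ext hv)
      rw [hv, hmm]
  by_cases hc : condT r N i m
  · rw [if_pos hc, if_pos (hiff.mp hc), hprod]
  · rw [if_neg hc, if_neg (fun hq => hc (hiff.mpr hq))]

def condR (r N i : ℕ) (m : Fin r → ℕ) : Prop :=
  (∀ a b : Fin r, (a : ℕ) ≤ i → (b : ℕ) ≤ i → a ≤ b → m a ≤ m b) ∧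
  (∀ a : Fin r, (a : ℕ) ≤ i → N ≤ m a) ∧
  (∀ a b : Fin r, i ≤ (a : ℕ) → a < b → m b < m a) ∧
  (∀ a : Fin r, i ≤ (a : ℕ) → 0 < m a)

lemma aux_iff_a (r N : ℕ) (hr : 1 ≤ r) (m : Fin r → ℕ) :
    (condT r N 0 m ∧ ¬ (m ⟨0, hr⟩ < N)) ↔ condR r N 0 m := by
  constructor
  · rintro ⟨⟨c1, c2, c3, c4⟩, hge⟩
    refine ⟨fun a b ha hb hab => ?_, fun a ha => ?_, fun a b _ hab => c3 a b (Nat.zero_le _) hab,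
      fun a _ => c4 a (Nat.zero_le _)⟩
    · have : a = b := Fin.ext (show (a : ℕ) = (b : ℕ) by omega)
      exact this ▸ le_refl _
    · have : a = ⟨0, hr⟩ := Fin.ext (show (a : ℕ) = 0 by omega)
      rw [this]
      exact Nat.le_of_not_lt hge
  · rintro ⟨r1, r2, r3, r4⟩
    exact ⟨⟨fun a b ha _ _ => absurd ha (by omega), fun a ha => absurd ha (by omega),
      fun a b _ hab => r3 a b (Nat.zero_le _) hab, fun a _ => r4 a (Nat.zero_le _)⟩,
      Nat.not_lt.mpr (r2 ⟨0, hr⟩ (Nat.zero_le _))⟩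

lemma aux_iff_b1 (r N k : ℕ) (hk : k + 2 ≤ r) (hN : 2 ≤ N) (m : Fin r → ℕ) :
    (condT r N (k + 1) m ∧ m ⟨k + 1, by omega⟩ < m ⟨k, by omega⟩) ↔ condR r N k m := by
  constructor
  · rintro ⟨⟨c1, c2, c3, c4⟩, hlt⟩
    refine ⟨fun a b ha hb hab => c1 a b (by omega) (by omega) hab,
      fun a ha => c2 a (by omega), fun a b ha hab => ?_, fun a ha => ?_⟩
    · by_cases ha' : k + 1 ≤ (a : ℕ)
      · exact c3 a b ha' hab
      · have hak : a = ⟨k, by omega⟩ := Fin.ext (show (a : ℕ) = k by omega)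
        have hb1 : k + 1 ≤ (b : ℕ) := by
          have : (a : ℕ) < (b : ℕ) := hab
          omega
        rw [congrArg m hak]
        by_cases hb' : (b : ℕ) = k + 1
        · have hbk : b = ⟨k + 1, by omega⟩ := Fin.ext (show (b : ℕ) = k + 1 by omega)
          rw [congrArg m hbk]
          exact hlt
        · have h1 : m b < m ⟨k + 1, by omega⟩ :=
            c3 ⟨k + 1, by omega⟩ b (show k + 1 ≤ k + 1 from le_refl _)
              (Fin.lt_def.mpr (show k + 1 < (b : ℕ) by omega))
          exact lt_trans h1 hlt
    · by_cases ha' : k + 1 ≤ (a : ℕ)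
      · exact c4 a ha'
      · have := c2 a (by omega)
        omega
  · rintro ⟨r1, r2, r3, r4⟩
    exact ⟨⟨fun a b ha hb hab => r1 a b (by omega) (by omega) hab,
      fun a ha => r2 a (by omega),
      fun a b ha hab => r3 a b (by omega) hab,
      fun a ha => r4 a (by omega)⟩,
      r3 ⟨k, by omega⟩ ⟨k + 1, by omega⟩ (show k ≤ k from le_refl _)
        (Fin.lt_def.mpr (show k < k + 1 by omega))⟩

lemma aux_iff_b2 (r N k : ℕ) (hk : k + 2 ≤ r) (hN : 2 ≤ N) (m : Fin r → ℕ) :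
    (condT r N (k + 1) m ∧ ¬ m ⟨k + 1, by omega⟩ < m ⟨k, by omega⟩) ↔ condR r N (k + 1) m := by
  constructor
  · rintro ⟨⟨c1, c2, c3, c4⟩, hge⟩
    have hge' : m ⟨k, by omega⟩ ≤ m ⟨k + 1, by omega⟩ := Nat.le_of_not_lt hge
    refine ⟨fun a b ha hb hab => ?_, fun a ha => ?_,
      fun a b ha hab => c3 a b ha hab, fun a ha => c4 a ha⟩
    · by_cases hb' : (b : ℕ) ≤ k
      · exact c1 a b (by omega) (by omega) hab
      · have hbk : b = ⟨k + 1, by omega⟩ := Fin.ext (show (b : ℕ) = k + 1 by omega)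
        rw [congrArg m hbk]
        by_cases ha' : (a : ℕ) ≤ k
        · exact le_trans
            (c1 a ⟨k, by omega⟩ (by omega) (show k < k + 1 by omega)
              (Fin.le_def.mpr (show (a : ℕ) ≤ k by omega))) hge'
        · have hak : a = ⟨k + 1, by omega⟩ := Fin.ext (show (a : ℕ) = k + 1 by omega)
          rw [congrArg m hak]
    · by_cases ha' : (a : ℕ) ≤ k
      · exact c2 a (by omega)
      · have hak : a = ⟨k + 1, by omega⟩ := Fin.ext (show (a : ℕ) = k + 1 by omega)
        rw [congrArg m hak]
        exact le_trans (c2 ⟨k, by omega⟩ (show k < k + 1 by omega)) hge'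
  · rintro ⟨r1, r2, r3, r4⟩
    refine ⟨⟨fun a b ha hb hab => r1 a b (by omega) (by omega) hab,
      fun a ha => r2 a (by omega),
      fun a b ha hab => r3 a b ha hab, fun a ha => r4 a ha⟩, ?_⟩
    exact Nat.not_lt.mpr (r1 ⟨k, by omega⟩ ⟨k + 1, by omega⟩ (show k ≤ k + 1 by omega)
      (show k + 1 ≤ k + 1 from le_refl _) (Fin.le_def.mpr (show k ≤ k + 1 by omega)))

lemma aux_iff_c (r N : ℕ) (hr : 1 ≤ r) (hN : 2 ≤ N) (m : Fin r → ℕ) :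
    condT r N r m ↔ condR r N (r - 1) m := by
  constructor
  · rintro ⟨c1, c2, c3, c4⟩
    refine ⟨fun a b ha hb hab => c1 a b a.isLt b.isLt hab,
      fun a ha => c2 a a.isLt,
      fun a b ha hab => ?_, fun a ha => ?_⟩
    · have h1 : (a : ℕ) < (b : ℕ) := hab
      have h2 := b.isLt
      omega
    · have := c2 a a.isLt
      omega
  · rintro ⟨r1, r2, r3, r4⟩
    refine ⟨fun a b ha hb hab => r1 a b (by have := a.isLt; omega) (by have := b.isLt; omega) hab,
      fun a ha => r2 a (by have := a.isLt; omega),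
      fun a b ha hab => absurd ha (by have := a.isLt; omega),
      fun a ha => absurd ha (by have := a.isLt; omega)⟩

lemma aux_partial (r N : ℕ) (hr : 1 ≤ r) (z s : ℕ → ℂ) :
    liPartialN r z s N = ∑' m : Fin r → ℕ,
      if condT r N 0 m ∧ m ⟨0, hr⟩ < N then
        ∏ t : Fin r, z (t : ℕ) ^ m t / (m t : ℂ) ^ s (t : ℕ)
      else 0 := by
  classical
  rw [liPartialN]
  rw [tsum_eq_sum (s := (Fintype.piFinset fun _ : Fin r => Finset.range N).filter
      (fun n => (∀ a b : Fin r, a < b → n b < n a) ∧ ∀ a, 0 < n a))]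
  · refine Finset.sum_congr rfl fun m hm => ?_
    rw [Finset.mem_filter, Fintype.mem_piFinset] at hm
    obtain ⟨hmem, hdec, hpos⟩ := hm
    have hlt : ∀ t : Fin r, m t < N := fun t => Finset.mem_range.mp (hmem t)
    rw [if_pos]
    refine ⟨⟨fun a b ha _ _ => absurd ha (by omega), fun a ha => absurd ha (by omega),
      fun a b _ hab => hdec a b hab, fun a _ => hpos a⟩, hlt _⟩
  · intro m hm
    rw [if_neg]
    rintro ⟨⟨c1, c2, c3, c4⟩, h0⟩
    apply hm
    rw [Finset.mem_filter, Fintype.mem_piFinset]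
    refine ⟨fun t => Finset.mem_range.mpr ?_, fun a b hab => c3 a b (Nat.zero_le _) hab,
      fun a => c4 a (Nat.zero_le _)⟩
    rcases Nat.eq_zero_or_pos (t : ℕ) with ht | ht
    · have : t = ⟨0, hr⟩ := Fin.ext ht
      rw [this]; exact h0
    · have : (⟨0, hr⟩ : Fin r) < t := Fin.lt_def.mpr (show 0 < (t : ℕ) by omega)
      have := c3 ⟨0, hr⟩ t (Nat.zero_le _) this
      omega


noncomputable def Taux (r N : ℕ) (z s : ℕ → ℂ) (i : ℕ) : ℂ :=
  ∑' m : Fin r → ℕ,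
    if condT r N i m then ∏ t : Fin r, z (t : ℕ) ^ m t / (m t : ℂ) ^ s (t : ℕ) else 0

noncomputable def Raux (r N : ℕ) (z s : ℕ → ℂ) (k : ℕ) : ℂ :=
  ∑' m : Fin r → ℕ,
    if condR r N k m then ∏ t : Fin r, z (t : ℕ) ^ m t / (m t : ℂ) ^ s (t : ℕ) else 0

lemma aux_summable_P (r : ℕ) (z s : ℕ → ℂ) (hz : ∀ t, t < r → ‖z t‖ ≤ 1)
    (hs : ∀ t, t < r → 1 < (s t).re) (Q : (Fin r → ℕ) → Prop) [DecidablePred Q]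
    (hQ : ∀ m, Q m → ∀ t, 0 < m t) :
    Summable (fun m : Fin r → ℕ =>
      if Q m then ∏ t : Fin r, z (t : ℕ) ^ m t / (m t : ℂ) ^ s (t : ℕ) else 0) :=
  (aux_summable_if r z s hz hs Q hQ).of_norm

lemma aux_condT_pos (r N i : ℕ) (hN : 2 ≤ N) (m : Fin r → ℕ) (h : condT r N i m) :
    ∀ t, 0 < m t := by
  intro t
  obtain ⟨c1, c2, c3, c4⟩ := h
  by_cases ht : (t : ℕ) < i
  · have := c2 t ht; omega
  · exact c4 t (by omega)

lemma aux_condR_pos (r N i : ℕ) (hN : 2 ≤ N) (m : Fin r → ℕ) (h : condR r N i m) :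
    ∀ t, 0 < m t := by
  intro t
  obtain ⟨r1, r2, r3, r4⟩ := h
  by_cases ht : (t : ℕ) ≤ i
  · have := r2 t ht; omega
  · exact r4 t (by omega)

lemma aux_split0 (r N : ℕ) (hr : 1 ≤ r) (hN : 2 ≤ N) (z s : ℕ → ℂ)
    (hz : ∀ t, t < r → ‖z t‖ ≤ 1) (hs : ∀ t, t < r → 1 < (s t).re) :
    Taux r N z s 0 = liPartialN r z s N + Raux r N z s 0 := by
  classical
  have h1 : Summable (fun m : Fin r → ℕ =>
      if condT r N 0 m ∧ m ⟨0, hr⟩ < N then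
        ∏ t : Fin r, z (t : ℕ) ^ m t / (m t : ℂ) ^ s (t : ℕ) else 0) :=
    aux_summable_P r z s hz hs _ (fun m hm => aux_condT_pos r N 0 hN m hm.1)
  have h2 : Summable (fun m : Fin r → ℕ =>
      if condR r N 0 m then
        ∏ t : Fin r, z (t : ℕ) ^ m t / (m t : ℂ) ^ s (t : ℕ) else 0) :=
    aux_summable_P r z s hz hs _ (fun m hm => aux_condR_pos r N 0 hN m hm)
  have hpt : ∀ m : Fin r → ℕ,
      (if condT r N 0 m then ∏ t : Fin r, z (t : ℕ) ^ m t / (m t : ℂ) ^ s (t : ℕ) else 0) =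
      (if condT r N 0 m ∧ m ⟨0, hr⟩ < N then
        ∏ t : Fin r, z (t : ℕ) ^ m t / (m t : ℂ) ^ s (t : ℕ) else 0) +
      (if condR r N 0 m then
        ∏ t : Fin r, z (t : ℕ) ^ m t / (m t : ℂ) ^ s (t : ℕ) else 0) := by
    intro m
    by_cases hc : condT r N 0 m
    · by_cases hlt : m ⟨0, hr⟩ < N
      · rw [if_pos hc, if_pos ⟨hc, hlt⟩,
          if_neg (fun hcr => ((aux_iff_a r N hr m).mpr hcr).2 hlt), add_zero]
      · rw [if_pos hc, if_neg (fun h => hlt h.2),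
          if_pos ((aux_iff_a r N hr m).mp ⟨hc, hlt⟩), zero_add]
    · rw [if_neg hc, if_neg (fun h => hc h.1),
        if_neg (fun hcr => hc ((aux_iff_a r N hr m).mpr hcr).1), add_zero]
  rw [Taux, tsum_congr hpt, Summable.tsum_add h1 h2, ← aux_partial r N hr z s, Raux]

lemma aux_splitK (r N k : ℕ) (hk : k + 2 ≤ r) (hN : 2 ≤ N) (z s : ℕ → ℂ)
    (hz : ∀ t, t < r → ‖z t‖ ≤ 1) (hs : ∀ t, t < r → 1 < (s t).re) :
    Taux r N z s (k + 1) = Raux r N z s k + Raux r N z s (k + 1) := by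
  classical
  have h1 : Summable (fun m : Fin r → ℕ =>
      if condR r N k m then
        ∏ t : Fin r, z (t : ℕ) ^ m t / (m t : ℂ) ^ s (t : ℕ) else 0) :=
    aux_summable_P r z s hz hs _ (fun m hm => aux_condR_pos r N k hN m hm)
  have h2 : Summable (fun m : Fin r → ℕ =>
      if condR r N (k + 1) m then
        ∏ t : Fin r, z (t : ℕ) ^ m t / (m t : ℂ) ^ s (t : ℕ) else 0) :=
    aux_summable_P r z s hz hs _ (fun m hm => aux_condR_pos r N (k + 1) hN m hm)
  have hpt : ∀ m : Fin r → ℕ,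
      (if condT r N (k + 1) m then
        ∏ t : Fin r, z (t : ℕ) ^ m t / (m t : ℂ) ^ s (t : ℕ) else 0) =
      (if condR r N k m then
        ∏ t : Fin r, z (t : ℕ) ^ m t / (m t : ℂ) ^ s (t : ℕ) else 0) +
      (if condR r N (k + 1) m then
        ∏ t : Fin r, z (t : ℕ) ^ m t / (m t : ℂ) ^ s (t : ℕ) else 0) := by
    intro m
    by_cases hc : condT r N (k + 1) m
    · by_cases hlt : m ⟨k + 1, by omega⟩ < m ⟨k, by omega⟩
      · rw [if_pos hc, if_pos ((aux_iff_b1 r N k hk hN m).mp ⟨hc, hlt⟩),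
          if_neg (fun hcr => ((aux_iff_b2 r N k hk hN m).mpr hcr).2 hlt), add_zero]
      · rw [if_pos hc, if_neg (fun hcr => hlt ((aux_iff_b1 r N k hk hN m).mpr hcr).2),
          if_pos ((aux_iff_b2 r N k hk hN m).mp ⟨hc, hlt⟩), zero_add]
    · rw [if_neg hc, if_neg (fun hcr => hc ((aux_iff_b1 r N k hk hN m).mpr hcr).1),
        if_neg (fun hcr => hc ((aux_iff_b2 r N k hk hN m).mpr hcr).1), add_zero]
  rw [Taux, tsum_congr hpt, Summable.tsum_add h1 h2, Raux, Raux]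

lemma aux_top (r N : ℕ) (hr : 1 ≤ r) (hN : 2 ≤ N) (z s : ℕ → ℂ) :
    Taux r N z s r = Raux r N z s (r - 1) :=
  tsum_congr fun m => if_congr (aux_iff_c r N hr hN m) rfl rfl


/-- the combinatorial identity
`Li_z(s)_{<N} = Σ_{i=0}^r (−1)^i Li*_{(z_i,…,z_1)}(s_i,…,s_1)_{≥N} · Li_{(z_{i+1},…,z_r)}(s_{i+1},…,s_r)`
for `Re(s_j) > 1` (so that all infinite series on the right converge absolutely). -/
theorem combinatorial_identity_partial_sum
    (r : ℕ) (hr : 1 ≤ r) (N : ℕ) (hN : 2 ≤ N) (z s : ℕ → ℂ)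
    (hz : ∀ i < r, ‖z i‖ ≤ 1) (hs : ∀ j < r, 1 < (s j).re) :
    (∀ i : ℕ, i ≤ r →
      (Summable (fun n : Fin i → ℕ =>
        if (∀ a b : Fin i, a ≤ b → n b ≤ n a) ∧ (∀ a, N ≤ n a) then
          ∏ t : Fin i, z (i - 1 - (t : ℕ)) ^ n t / (n t : ℂ) ^ s (i - 1 - (t : ℕ))
        else 0) ∧
      Summable (fun n : Fin (r - i) → ℕ =>
        if (∀ a b : Fin (r - i), a < b → n b < n a) ∧ (∀ a, 0 < n a) then
          ∏ t : Fin (r - i), z (i + (t : ℕ)) ^ n t / (n t : ℂ) ^ s (i + (t : ℕ))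
        else 0))) ∧
    liPartialN r z s N =
      ∑ i ∈ Finset.range (r + 1),
        (-1 : ℂ) ^ i *
          liStarTailN i (fun j => z (i - 1 - j)) (fun j => s (i - 1 - j)) N *
          liSumN (r - i) (fun j => z (i + j)) (fun j => s (i + j)) := by
  classical
  constructor
  · intro i hi
    constructor
    · exact (aux_summable_if i (fun t => z (i - 1 - t)) (fun t => s (i - 1 - t))
        (fun t ht => hz _ (by omega)) (fun t ht => hs _ (by omega))
        (fun n => (∀ a b : Fin i, a ≤ b → n b ≤ n a) ∧ (∀ a, N ≤ n a))
        (fun n hn t => by have := hn.2 t; omega)).of_norm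
    · exact (aux_summable_if (r - i) (fun t => z (i + t)) (fun t => s (i + t))
        (fun t ht => hz _ (by omega)) (fun t ht => hs _ (by omega))
        (fun n => (∀ a b : Fin (r - i), a < b → n b < n a) ∧ (∀ a, 0 < n a))
        (fun n hn t => hn.2 t)).of_norm
  · have hz' : ∀ t, t < r → ‖z t‖ ≤ 1 := hz
    have hs' : ∀ t, t < r → 1 < (s t).re := hs
    have key : ∀ k, k + 1 ≤ r →
        ∑ i ∈ Finset.range (k + 1), (-1 : ℂ) ^ i * Taux r N z s i =
          liPartialN r z s N + (-1 : ℂ) ^ k * Raux r N z s k := by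
      intro k
      induction k with
      | zero =>
          intro _
          rw [Finset.sum_range_one]
          simp only [pow_zero, one_mul]
          exact aux_split0 r N hr hN z s hz' hs'
      | succ k ihk =>
          intro hk1
          rw [Finset.sum_range_succ, ihk (by omega),
            aux_splitK r N k (by omega) hN z s hz' hs']
          ring
    have hr1 : r - 1 + 1 = r := by omega
    have hkey := key (r - 1) (by omega)
    rw [hr1] at hkey
    have hfin : liPartialN r z s N =
        ∑ i ∈ Finset.range (r + 1), (-1 : ℂ) ^ i * Taux r N z s i := by
      rw [Finset.sum_range_succ, hkey, aux_top r N hr hN z s]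
      have hsign : ((-1 : ℂ)) ^ r = -((-1 : ℂ)) ^ (r - 1) := by
        conv_lhs => rw [show r = (r - 1) + 1 by omega]
        rw [pow_succ]; ring
      rw [hsign]; ring
    rw [hfin]
    refine Finset.sum_congr rfl fun i hi => ?_
    rw [Finset.mem_range] at hi
    have hfact : Taux r N z s i =
        liStarTailN i (fun j => z (i - 1 - j)) (fun j => s (i - 1 - j)) N *
          liSumN (r - i) (fun j => z (i + j)) (fun j => s (i + j)) :=
      aux_factorize i (r - i) r (by omega) N hN z s hz' hs'
    rw [hfact, mul_assoc]
end

section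
/- Let N ≥ 2 and r ≥ 1 be integers, let (z_1,…,z_r) ∈ ℂ^r with |z_i| ≤ 1 for all i, let K be a compact subset of ℂ^r, and let k_0 be the smallest non-negative integer such that (s_1+k_0, s_2,…,s_r) ∈ U_r for all (s_1,…,s_r) ∈ K. Then the family of functions ((s_1,…,s_r) ↦ (s_1−1)_{k+1}/(k+1)! · z_1^{n_1}z_2^{n_2}⋯z_r^{n_r}/(n_1^{s_1+k} n_2^{s_2}⋯n_r^{s_r})), indexed by integers n_1 ≥ n_2 ≥ ⋯ ≥ n_r ≥ N and k ≥ k_0, converges normally on K, i.e. the sum over all indices of the suprema over K of the absolute values is finite; moreover there exists ε > 0 such that this sum of suprema is O(N^{−ε}) as N → ∞. -/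
open scoped Classical
open Filter Topology Asymptotics

set_option linter.unusedVariables false

section Aux
open Finset

lemma merge_sum_eq (d : ℕ → ℝ) (m : ℕ) :
    ∑ j ∈ range (m+1), (fun i => if i = 0 then d 0 + d 1 else d (i+1)) j
      = ∑ j ∈ range (m+2), d j := by
  induction m with
  | zero => simp [Finset.sum_range_succ]
  | succ m ih =>
      rw [Finset.sum_range_succ, ih, if_neg (Nat.succ_ne_zero m)]
      exact (Finset.sum_range_succ d (m+2)).symm

lemma prod_rpow_le_one : ∀ (r : ℕ) (n d : ℕ → ℝ),
    (∀ i, i < r → 1 ≤ n i) →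
    (∀ i j, i ≤ j → j < r → n j ≤ n i) →
    (∀ m, m < r → 0 ≤ ∑ j ∈ range (m+1), d j) →
    ∏ i ∈ range r, n i ^ (-(d i)) ≤ 1 := by
  intro r
  induction r with
  | zero => intro n d _ _ _; simp
  | succ r ih =>
    intro n d hn1 hmono hsum
    match r with
    | 0 =>
        rw [show (0:ℕ)+1 = 1 from rfl, Finset.prod_range_one]
        exact Real.rpow_le_one_of_one_le_of_nonpos (hn1 0 Nat.one_pos)
          (neg_nonpos.mpr (by simpa using hsum 0 Nat.one_pos))
    | t + 1 =>
        have h1 : (0:ℝ) < n 1 := lt_of_lt_of_le one_pos (hn1 1 (by omega))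
        have hd0 : 0 ≤ d 0 := by simpa using hsum 0 (by omega)
        have key : ∏ i ∈ range (t+2), n i ^ (-(d i))
            ≤ ∏ i ∈ range (t+1),
                n (i+1) ^ (-(if i = 0 then d 0 + d 1 else d (i+1))) := by
          rw [Finset.prod_range_succ' (fun i => n i ^ (-(d i))) (t+1),
            Finset.prod_range_succ' (fun i => n (i+1) ^ (-(d (i+1)))) t,
            Finset.prod_range_succ'
              (fun i => n (i+1) ^ (-(if i = 0 then d 0 + d 1 else d (i+1)))) t]
          simp only [Nat.succ_ne_zero, if_false, if_true, zero_add, ite_true, ite_false]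
          rw [mul_assoc]
          refine mul_le_mul_of_nonneg_left ?_ (Finset.prod_nonneg fun i hi =>
            Real.rpow_nonneg
              (le_of_lt (lt_of_lt_of_le one_pos (hn1 (i+1+1) (by
                have := Finset.mem_range.mp hi; omega)))) _)
          calc n 1 ^ (-(d 1)) * n 0 ^ (-(d 0))
              ≤ n 1 ^ (-(d 1)) * n 1 ^ (-(d 0)) := by
                refine mul_le_mul_of_nonneg_left ?_ (Real.rpow_nonneg (le_of_lt h1) _)
                exact Real.rpow_le_rpow_of_nonpos h1 (hmono 0 1 (by omega) (by omega))
                  (neg_nonpos.mpr hd0)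
            _ = n 1 ^ (-(d 0 + d 1)) := by
                rw [← Real.rpow_add h1]; ring_nf
        refine le_trans key (ih (fun i => n (i+1))
          (fun i => if i = 0 then d 0 + d 1 else d (i+1)) ?_ ?_ ?_)
        · intro i h; exact hn1 (i+1) (by omega)
        · intro i j hij hj; exact hmono (i+1) (j+1) (by omega) (by omega)
        · intro m hm
          rw [merge_sum_eq]
          exact hsum (m+1) (by omega)

lemma summable_pi_prod : ∀ (r : ℕ) (u : ℕ → ℝ), (∀ n, 0 ≤ u n) → Summable u →
    Summable (fun n : Fin r → ℕ => ∏ i, u (n i)) := by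
  intro r
  induction r with
  | zero =>
      intro u _ _
      have he : (fun n : Fin 0 → ℕ => ∏ i, u (n i)) = fun _ => 1 := by
        funext n; simp
      rw [he]
      haveI : Unique (Fin 0 → ℕ) := Pi.uniqueOfIsEmpty _
      haveI : Finite (Fin 0 → ℕ) := Finite.of_subsingleton
      exact Summable.of_finite
  | succ r ih =>
      intro u hu hsu
      have h2 : Summable (fun q : ℕ × (Fin r → ℕ) => u q.1 * ∏ i, u (q.2 i)) :=
        Summable.mul_of_nonneg (f := u) (g := fun n : Fin r → ℕ => ∏ i, u (n i))
          hsu (ih u hu hsu) (fun n => hu n)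
          (fun n => Finset.prod_nonneg fun i _ => hu _)
      have h3 := h2.comp_injective (Fin.consEquiv (fun _ : Fin (r+1) => ℕ)).symm.injective
      refine h3.congr fun n => ?_
      show u ((Fin.consEquiv (fun _ : Fin (r+1) => ℕ)).symm n).1 * ∏ i, u (((Fin.consEquiv (fun _ : Fin (r+1) => ℕ)).symm n).2 i)
          = ∏ i, u (n i)
      rw [Fin.prod_univ_succ]
      rfl

lemma sum_range_eq_sum_Iic {r : ℕ} (g : Fin r → ℝ) :
    ∀ (m : ℕ) (hm : m < r),
    ∑ j ∈ range (m+1), (if h : j < r then g ⟨j, h⟩ else 0)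
      = ∑ j ∈ Finset.Iic (⟨m, hm⟩ : Fin r), g j := by
  intro m
  induction m with
  | zero =>
      intro hm
      have : Finset.Iic (⟨0, hm⟩ : Fin r) = {⟨0, hm⟩} := by
        ext j
        simp only [Finset.mem_Iic, Finset.mem_singleton, Fin.le_def, Fin.ext_iff]
        omega
      rw [this]
      simp [hm]
  | succ m ih =>
      intro hm
      have hm' : m < r := by omega
      have hins : Finset.Iic (⟨m+1, hm⟩ : Fin r)
          = insert ⟨m+1, hm⟩ (Finset.Iic (⟨m, hm'⟩ : Fin r)) := by
        ext j
        simp only [Finset.mem_Iic, Finset.mem_insert, Fin.le_def, Fin.ext_iff]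
        omega
      rw [hins, Finset.sum_insert (by simp [Finset.mem_Iic, Fin.le_def]),
        Finset.sum_range_succ, ih hm', dif_pos hm]
      exact add_comm _ _

lemma summable_b (A : ℝ) (hA : 1 ≤ A) (k₀ : ℕ) :
    Summable (fun k : ℕ => (2:ℝ)^k₀ *
      ((∏ j ∈ range (k+1), (A + (j:ℝ))) / (Nat.factorial (k+1) : ℝ)) * (1/2:ℝ)^k) := by
  have hA0 : (0:ℝ) < A := lt_of_lt_of_le one_pos hA
  set f : ℕ → ℝ := fun k =>
    ((∏ j ∈ range (k+1), (A + (j:ℝ))) / (Nat.factorial (k+1) : ℝ)) * (1/2:ℝ)^k with hf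
  have hPpos : ∀ k, (0:ℝ) < ∏ j ∈ range k, (A + (j:ℝ)) := fun k =>
    Finset.prod_pos fun j _ => add_pos_of_pos_of_nonneg hA0 (Nat.cast_nonneg j)
  have hfpos : ∀ k, 0 < f k := fun k => by
    have h1 : (0:ℝ) < (Nat.factorial (k+1) : ℝ) := by
      exact_mod_cast Nat.factorial_pos (k+1)
    exact mul_pos (div_pos (hPpos (k+1)) h1) (by positivity)
  have hrec : ∀ k, f (k+1) = f k * ((A + (k+1)) / (((k:ℝ)+2) * 2)) := by
    intro k
    have h1 : ((Nat.factorial (k+1+1)) : ℝ) = ((k:ℝ)+2) * (Nat.factorial (k+1) : ℝ) := by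
      rw [Nat.factorial_succ]; push_cast; ring
    have h2 : ∏ j ∈ range (k+1+1), (A + (j:ℝ))
        = (∏ j ∈ range (k+1), (A + (j:ℝ))) * (A + ((k:ℝ)+1)) := by
      rw [Finset.prod_range_succ]; push_cast; ring
    have hfa : ((Nat.factorial (k+1)) : ℝ) ≠ 0 := by
      exact_mod_cast (Nat.factorial_pos (k+1)).ne'
    rw [hf]
    simp only []
    rw [h1, h2, pow_succ]
    field_simp
  have hratio : Tendsto (fun k : ℕ => ‖f (k+1)‖ / ‖f k‖) atTop (𝓝 (1/2)) := by
    have heq : ∀ k : ℕ, ‖f (k+1)‖ / ‖f k‖ = (A + ((k:ℝ)+1)) / (((k:ℝ)+2) * 2) := by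
      intro k
      rw [Real.norm_eq_abs, Real.norm_eq_abs, abs_of_pos (hfpos (k+1)), abs_of_pos (hfpos k),
        hrec k, mul_comm, mul_div_assoc, div_self (hfpos k).ne', mul_one]
    rw [show (fun k : ℕ => ‖f (k+1)‖ / ‖f k‖)
        = fun k : ℕ => (A + ((k:ℝ)+1)) / (((k:ℝ)+2) * 2) from funext heq]
    have h0 : Tendsto (fun k : ℕ => (A - 1) / ((k:ℝ)+2)) atTop (𝓝 0) := by
      apply Tendsto.div_atTop (tendsto_const_nhds)
      exact tendsto_atTop_add_const_right _ 2 tendsto_natCast_atTop_atTop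
    have : Tendsto (fun k : ℕ => (1 + (A - 1) / ((k:ℝ)+2)) * (1/2)) atTop
        (𝓝 ((1 + 0) * (1/2))) := (tendsto_const_nhds.add h0).mul tendsto_const_nhds
    rw [show ((1:ℝ) + 0) * (1/2) = 1/2 by norm_num] at this
    refine this.congr fun k => ?_
    have hk2 : ((k:ℝ)+2) ≠ 0 := by positivity
    field_simp
    ring
  have hsf : Summable f :=
    summable_of_ratio_test_tendsto_lt_one (by norm_num)
      (Filter.Eventually.of_forall fun k => (hfpos k).ne') hratio
  have := hsf.mul_left ((2:ℝ)^k₀)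
  refine this.congr fun k => by rw [hf]; ring
end Aux


/-- Pochhammer symbol `(s)_k = s(s+1)⋯(s+k-1)`. -/
noncomputable def poch (s : ℂ) (k : ℕ) : ℂ := ∏ j ∈ Finset.range k, (s + j)

/-- The supremum over `K` of the absolute value of the term indexed by `p = (n, k)`:
`(s_1−1)_{k+1}/(k+1)! · z_1^{n_1}⋯z_r^{n_r}/(n_1^{s_1+k} n_2^{s_2}⋯n_r^{s_r})`
if `n_1 ≥ ⋯ ≥ n_r ≥ N` and `k ≥ k₀`, and `0` otherwise. -/
noncomputable def supTerm (r : ℕ) (hr : 0 < r) (z : Fin r → ℂ) (K : Set (Fin r → ℂ))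
    (k₀ N : ℕ) (p : (Fin r → ℕ) × ℕ) : ℝ :=
  if (∀ i j : Fin r, i ≤ j → p.1 j ≤ p.1 i) ∧ (∀ i, N ≤ p.1 i) ∧ k₀ ≤ p.2 then
    ⨆ s ∈ K,
      ‖poch (s ⟨0, hr⟩ - 1) (p.2 + 1) / (Nat.factorial (p.2 + 1) : ℂ) *
        ∏ i, z i ^ p.1 i /
          (p.1 i : ℂ) ^ (s i + if i = (⟨0, hr⟩ : Fin r) then (p.2 : ℂ) else 0)‖
  else 0

/-- normal convergence on a compact `K` of the doubly indexed family, where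
`k₀` is the least non-negative integer with `(s_1+k₀,s_2,…,s_r) ∈ U_r` for all `s ∈ K`;
moreover the total sum of the suprema is `O(N^{−ε})` for some `ε > 0`. -/
theorem normal_convergence_of_translation_family
    (r : ℕ) (hr : 0 < r) (z : Fin r → ℂ) (hz : ∀ i, ‖z i‖ ≤ 1)
    (K : Set (Fin r → ℂ)) (hK : IsCompact K) (k₀ : ℕ)
    (hk₀ : ∀ s ∈ K, ∀ i : Fin r,
      ((i : ℕ) + 1 : ℝ) < (∑ j ∈ Finset.Iic i, s j).re + k₀)
    (hk₀min : ∀ k' : ℕ, k' < k₀ → ∃ s ∈ K, ∃ i : Fin r,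
      ¬(((i : ℕ) + 1 : ℝ) < (∑ j ∈ Finset.Iic i, s j).re + k')) :
    (∀ N : ℕ, 2 ≤ N → Summable (fun p : (Fin r → ℕ) × ℕ => supTerm r hr z K k₀ N p)) ∧
    ∃ ε : ℝ, 0 < ε ∧
      (fun N : ℕ => ∑' p : (Fin r → ℕ) × ℕ, supTerm r hr z K k₀ N p)
        =O[atTop] fun N : ℕ => (N : ℝ) ^ (-ε) := by
  classical
  -- a bound `A` for `‖s ⟨0,hr⟩ - 1‖` on `K`
  obtain ⟨C, hC⟩ := hK.exists_bound_of_continuousOn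
    (f := fun s : Fin r → ℂ => s ⟨0, hr⟩ - 1)
    (((continuous_apply (⟨0, hr⟩ : Fin r)).sub continuous_const).continuousOn)
  set A : ℝ := max C 1 with hAdef
  have hA1 : (1:ℝ) ≤ A := le_max_right _ _
  have hA0 : (0:ℝ) < A := lt_of_lt_of_le one_pos hA1
  have hAb : ∀ s ∈ K, ‖s (⟨0, hr⟩ : Fin r) - 1‖ ≤ A := fun s hs =>
    (hC s hs).trans (le_max_left _ _)
  -- a uniform margin `δ`
  obtain ⟨δ, hδpos, hδK⟩ : ∃ δ : ℝ, 0 < δ ∧ ∀ s ∈ K, ∀ i : Fin r,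
      ((i:ℕ)+1:ℝ) + δ ≤ (∑ j ∈ Finset.Iic i, (s j).re) + k₀ := by
    rcases K.eq_empty_or_nonempty with hKe | hKne
    · exact ⟨1, one_pos, by simp [hKe]⟩
    · have hcont : ∀ i : Fin r,
          Continuous (fun s : Fin r → ℂ => ∑ j ∈ Finset.Iic i, (s j).re) := fun i =>
        continuous_finset_sum _ fun j _ => Complex.continuous_re.comp (continuous_apply j)
      choose sm hsmK hsmmin using fun i : Fin r =>
        hK.exists_isMinOn hKne ((hcont i).continuousOn)
      haveI : Nonempty (Fin r) := ⟨⟨0, hr⟩⟩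
      set δf : Fin r → ℝ := fun i =>
        (∑ j ∈ Finset.Iic i, ((sm i) j).re) + (k₀:ℝ) - (((i:ℕ):ℝ)+1) with hδf
      refine ⟨Finset.univ.inf' Finset.univ_nonempty δf, ?_, ?_⟩
      · rw [Finset.lt_inf'_iff]
        intro i _
        have := hk₀ (sm i) (hsmK i) i
        have hre : (∑ j ∈ Finset.Iic i, (sm i) j).re
            = ∑ j ∈ Finset.Iic i, ((sm i) j).re := Complex.re_sum _ _
        simp only [hδf]
        rw [hre] at this
        linarith
      · intro s hs i
        have h1 : Finset.univ.inf' Finset.univ_nonempty δf ≤ δf i :=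
          Finset.inf'_le _ (Finset.mem_univ i)
        have h2 : (∑ j ∈ Finset.Iic i, ((sm i) j).re)
            ≤ ∑ j ∈ Finset.Iic i, (s j).re := hsmmin i hs
        simp only [hδf] at h1
        linarith
  have hre' : ∀ s : Fin r → ℂ, ∀ i : Fin r,
      (∑ j ∈ Finset.Iic i, s j).re = ∑ j ∈ Finset.Iic i, (s j).re :=
    fun s i => Complex.re_sum _ _
  have hr' : (0:ℝ) < (r:ℝ) := by exact_mod_cast hr
  set ε₀ : ℝ := δ / (2*(r:ℝ)) with hε₀def
  have hε₀ : 0 < ε₀ := div_pos hδpos (by positivity)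
  set ε : ℝ := (r:ℝ) * ε₀ with hεdef
  have hε : 0 < ε := mul_pos hr' hε₀
  set c : ℝ := 1 + 2*ε₀ with hcdef
  have hδeq : 2*(r:ℝ)*ε₀ = δ := by
    rw [hε₀def]; field_simp
  set u : ℕ → ℝ := fun m => (m:ℝ) ^ (-(1+ε₀)) with hudef
  have hu0 : ∀ m, 0 ≤ u m := fun m => Real.rpow_nonneg (Nat.cast_nonneg m) _
  have hsu : Summable u := Real.summable_nat_rpow.mpr (by linarith)
  set b : ℕ → ℝ := fun k => (2:ℝ)^k₀ *
    ((∏ j ∈ Finset.range (k+1), (A + (j:ℝ))) / (Nat.factorial (k+1) : ℝ)) * (1/2:ℝ)^k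
    with hbdef
  have hb0 : ∀ k, 0 ≤ b k := fun k => by
    apply mul_nonneg (mul_nonneg (by positivity) _) (by positivity)
    apply div_nonneg _ (Nat.cast_nonneg _)
    exact Finset.prod_nonneg fun j _ => add_nonneg hA0.le (Nat.cast_nonneg _)
  have hsb : Summable b := summable_b A hA1 k₀
  set h : (Fin r → ℕ) × ℕ → ℝ := fun p => (∏ i, u (p.1 i)) * b p.2 with hhdef
  have hh0 : ∀ p, 0 ≤ h p := fun p =>
    mul_nonneg (Finset.prod_nonneg fun i _ => hu0 _) (hb0 _)
  have hsh : Summable h :=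
    Summable.mul_of_nonneg (f := fun m : Fin r → ℕ => ∏ i, u (m i)) (g := b)
      (summable_pi_prod r u hu0 hsu) hsb
      (fun m => Finset.prod_nonneg fun i _ => hu0 _) hb0
  have st0 : ∀ N p, 0 ≤ supTerm r hr z K k₀ N p := by
    intro N p
    unfold supTerm
    split
    · exact Real.iSup_nonneg fun s => Real.iSup_nonneg fun _ => norm_nonneg _
    · exact le_refl 0
  -- the key pointwise bound
  have key : ∀ N : ℕ, 2 ≤ N → ∀ p : (Fin r → ℕ) × ℕ,
      supTerm r hr z K k₀ N p ≤ (N:ℝ)^(-ε) * h p := by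
    intro N hN p
    have hNpos : (0:ℝ) < (N:ℝ) := by
      have : (0:ℕ) < N := by omega
      exact_mod_cast this
    have hN2 : (2:ℝ) ≤ (N:ℝ) := by exact_mod_cast hN
    have hB0 : 0 ≤ (N:ℝ)^(-ε) * h p := mul_nonneg (Real.rpow_nonneg hNpos.le _) (hh0 p)
    unfold supTerm
    split_ifs with hcond
    swap
    · exact hB0
    obtain ⟨hord, hNle, hk⟩ := hcond
    refine Real.iSup_le (fun s => Real.iSup_le (fun hs => ?_) hB0) hB0
    set n : Fin r → ℕ := p.1 with hndef
    set k : ℕ := p.2 with hkdef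
    set i0 : Fin r := ⟨0, hr⟩ with hi0
    set nn : Fin r → ℝ := fun i => (n i : ℝ) with hnn
    have hnn2 : ∀ i, (2:ℝ) ≤ nn i := fun i => by
      have h1 : N ≤ n i := hNle i
      have h2 : (2:ℕ) ≤ n i := le_trans hN h1
      simp only [hnn]
      exact_mod_cast h2
    have hnnpos : ∀ i, (0:ℝ) < nn i := fun i => lt_of_lt_of_le two_pos (hnn2 i)
    have hnn1 : ∀ i, (1:ℝ) ≤ nn i := fun i => le_trans one_le_two (hnn2 i)
    have hNlenn : ∀ i, (N:ℝ) ≤ nn i := fun i => by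
      have h1 := hNle i
      simp only [hnn]
      exact_mod_cast h1
    set e : Fin r → ℝ := fun i => (s i).re + (if i = i0 then (k:ℝ) else 0) with hedef
    set f : Fin r → ℝ := fun i => (s i).re + (if i = i0 then (k₀:ℝ) else 0) with hfdef
    have hfact : (0:ℝ) < (Nat.factorial (k+1) : ℝ) := by
      exact_mod_cast Nat.factorial_pos (k+1)
    have hPA : (0:ℝ) ≤ ∏ j ∈ Finset.range (k+1), (A + (j:ℝ)) :=
      Finset.prod_nonneg fun j _ => add_nonneg hA0.le (Nat.cast_nonneg _)
    -- step 1
    have step1 : ‖poch (s i0 - 1) (k + 1) / (Nat.factorial (k + 1) : ℂ) *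
        ∏ i, z i ^ n i / (n i : ℂ) ^ (s i + if i = i0 then (k : ℂ) else 0)‖
        ≤ (∏ j ∈ Finset.range (k+1), (A + (j:ℝ))) / (Nat.factorial (k+1) : ℝ) *
          ∏ i, nn i ^ (-(e i)) := by
      rw [norm_mul, norm_div, Complex.norm_natCast, norm_prod]
      have hpoch : ‖poch (s i0 - 1) (k+1)‖ ≤ ∏ j ∈ Finset.range (k+1), (A + (j:ℝ)) := by
        rw [poch, norm_prod]
        refine Finset.prod_le_prod (fun j _ => norm_nonneg _) (fun j _ => ?_)
        refine (norm_add_le _ _).trans ?_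
        rw [Complex.norm_natCast]
        exact add_le_add_left (hAb s hs) _
      have hfac : ∀ i : Fin r, ‖z i ^ n i / (n i : ℂ) ^ (s i + if i = i0 then (k:ℂ) else 0)‖
          ≤ nn i ^ (-(e i)) := by
        intro i
        have hre : (s i + if i = i0 then (k:ℂ) else 0).re = e i := by
          rw [Complex.add_re, apply_ite Complex.re]
          simp [hedef]
        have hni : 0 < n i := by have := hNle i; omega
        rw [norm_div, norm_pow, Complex.norm_natCast_cpow_of_pos hni, hre,
          Real.rpow_neg (hnnpos i).le]
        have hb : 0 < nn i ^ (e i) := Real.rpow_pos_of_pos (hnnpos i) _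
        have hz1 : ‖z i‖ ^ n i ≤ 1 := pow_le_one₀ (norm_nonneg _) (hz i)
        calc ‖z i‖ ^ n i / (nn i) ^ (e i) ≤ 1 / (nn i) ^ (e i) := by gcongr
          _ = ((nn i) ^ (e i))⁻¹ := one_div _
      refine mul_le_mul ?_ ?_ ?_ ?_
      · exact (div_le_div_iff_of_pos_right hfact).mpr hpoch
      · exact Finset.prod_le_prod (fun i _ => norm_nonneg _) (fun i _ => hfac i)
      · exact Finset.prod_nonneg fun i _ => norm_nonneg _
      · exact div_nonneg hPA hfact.le
    -- step 2 : split off the extra power of n (i0)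
    set t : ℝ := (k:ℝ) - (k₀:ℝ) with htdef
    have ht0 : 0 ≤ t := by
      rw [htdef]; have : (k₀:ℝ) ≤ (k:ℝ) := by exact_mod_cast hk
      linarith
    have step2 : ∏ i, nn i ^ (-(e i))
        = nn i0 ^ (-t) * ∏ i, nn i ^ (-(f i)) := by
      have hef : ∀ i : Fin r, (-(e i)) = (-(if i = i0 then t else 0)) + (-(f i)) := by
        intro i
        by_cases hi : i = i0 <;> simp [hedef, hfdef, hi, htdef] <;> ring
      calc ∏ i, nn i ^ (-(e i))
          = ∏ i, (nn i ^ (-(if i = i0 then t else 0)) * nn i ^ (-(f i))) :=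
            Finset.prod_congr rfl fun i _ => by
              rw [← Real.rpow_add (hnnpos i), ← hef i]
        _ = (∏ i, nn i ^ (-(if i = i0 then t else 0))) * ∏ i, nn i ^ (-(f i)) :=
            Finset.prod_mul_distrib
        _ = nn i0 ^ (-t) * ∏ i, nn i ^ (-(f i)) := by
            congr 1
            rw [Finset.prod_eq_single i0 (fun i _ hne => by simp [hne])
              (fun hni0 => absurd (Finset.mem_univ _) hni0)]
            simp
    -- step 3
    have hhalf : (2:ℝ) ^ (-t) = (1/2:ℝ)^(k - k₀) := by
      have : t = ((k - k₀ : ℕ):ℝ) := by rw [htdef, Nat.cast_sub hk]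
      rw [this, Real.rpow_neg (by norm_num : (0:ℝ) ≤ 2), Real.rpow_natCast, ← inv_pow]
      norm_num
    have step3 : nn i0 ^ (-t) ≤ (1/2:ℝ)^(k - k₀) := by
      rw [← hhalf]
      exact Real.rpow_le_rpow_of_nonpos two_pos (hnn2 i0) (neg_nonpos.mpr ht0)
    have hhalf2 : (1/2:ℝ)^(k - k₀) = (2:ℝ)^k₀ * (1/2:ℝ)^k := by
      have hk' : k₀ + (k - k₀) = k := by omega
      calc (1/2:ℝ)^(k - k₀) = 1 * (1/2:ℝ)^(k - k₀) := (one_mul _).symm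
        _ = ((2:ℝ) * (1/2))^k₀ * (1/2:ℝ)^(k-k₀) := by norm_num
        _ = (2:ℝ)^k₀ * ((1/2:ℝ)^k₀ * (1/2:ℝ)^(k-k₀)) := by rw [mul_pow]; ring
        _ = (2:ℝ)^k₀ * (1/2:ℝ)^k := by rw [← pow_add, hk']
    -- step 4
    have step4 : ∏ i, nn i ^ (-(f i)) ≤ ∏ i, nn i ^ (-c) := by
      have hsplit : ∏ i, nn i ^ (-(f i))
          = (∏ i, nn i ^ (-(f i - c))) * ∏ i, nn i ^ (-c) := by
        rw [← Finset.prod_mul_distrib]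
        refine Finset.prod_congr rfl fun i _ => ?_
        rw [← Real.rpow_add (hnnpos i)]
        ring_nf
      have hle1 : ∏ i, nn i ^ (-(f i - c)) ≤ 1 := by
        have hconv : ∏ i : Fin r, nn i ^ (-(f i - c))
            = ∏ j ∈ Finset.range r, ((fun j => if hj : j < r then nn ⟨j, hj⟩ else 1) j)
                ^ (-((fun j => if hj : j < r then f ⟨j, hj⟩ - c else 0) j)) := by
          rw [← Fin.prod_univ_eq_prod_range]
          exact Finset.prod_congr rfl fun i _ => by simp [i.isLt]
        rw [hconv]
        refine prod_rpow_le_one r _ _ ?_ ?_ ?_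
        · intro j hj; rw [dif_pos hj]; exact hnn1 _
        · intro i j hij hj
          have hi : i < r := lt_of_le_of_lt hij hj
          rw [dif_pos hj, dif_pos hi]
          have h3 := hord ⟨i, hi⟩ ⟨j, hj⟩ hij
          simp only [hnn]
          exact_mod_cast h3
        · intro m hm
          have h1 : ∀ j ∈ Finset.range (m+1),
              (fun j => if hj : j < r then f ⟨j, hj⟩ - c else 0) j
              = (fun j => if hj : j < r then f ⟨j, hj⟩ else 0) j - c := by
            intro j hj
            have hjr : j < r := by
              have := Finset.mem_range.mp hj; omega
            simp only [dif_pos hjr]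
          rw [Finset.sum_congr rfl h1, Finset.sum_sub_distrib,
            sum_range_eq_sum_Iic f m hm, Finset.sum_const, Finset.card_range,
            nsmul_eq_mul]
          have hIic : ∑ j ∈ Finset.Iic (⟨m, hm⟩ : Fin r), f j
              = (∑ j ∈ Finset.Iic (⟨m, hm⟩ : Fin r), (s j).re) + (k₀:ℝ) := by
            rw [hfdef]
            rw [Finset.sum_add_distrib]
            congr 1
            rw [Finset.sum_ite_eq' (Finset.Iic (⟨m, hm⟩ : Fin r)) i0 (fun _ => (k₀:ℝ))]
            rw [if_pos]
            simp [hi0, Finset.mem_Iic, Fin.le_def]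
          have hlow := hδK s hs ⟨m, hm⟩
          have hmr : ((m:ℝ)+1) ≤ (r:ℝ) := by exact_mod_cast hm
          have h2eps : ((m:ℝ)+1) * (2*ε₀) ≤ δ := by
            calc ((m:ℝ)+1) * (2*ε₀) ≤ (r:ℝ) * (2*ε₀) := by
                  apply mul_le_mul_of_nonneg_right hmr (by positivity)
              _ = 2*(r:ℝ)*ε₀ := by ring
              _ = δ := hδeq
          rw [hIic]
          simp only [Fin.val_mk] at hlow
          have hgoal : ((m+1:ℕ):ℝ) * c
              ≤ (∑ j ∈ Finset.Iic (⟨m, hm⟩ : Fin r), (s j).re) + (k₀:ℝ) := by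
            calc ((m+1:ℕ):ℝ) * c = ((m:ℝ)+1) + ((m:ℝ)+1)*(2*ε₀) := by
                  rw [hcdef]; push_cast; ring
              _ ≤ ((m:ℝ)+1) + δ := by linarith [h2eps]
              _ ≤ (∑ j ∈ Finset.Iic (⟨m, hm⟩ : Fin r), (s j).re) + (k₀:ℝ) := hlow
          linarith [hgoal]
      calc ∏ i, nn i ^ (-(f i)) = (∏ i, nn i ^ (-(f i - c))) * ∏ i, nn i ^ (-c) := hsplit
        _ ≤ 1 * ∏ i, nn i ^ (-c) := by
            apply mul_le_mul_of_nonneg_right hle1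
            exact Finset.prod_nonneg fun i _ => Real.rpow_nonneg (hnnpos i).le _
        _ = ∏ i, nn i ^ (-c) := one_mul _
    -- step 5
    have step5 : ∏ i, nn i ^ (-c) ≤ (N:ℝ)^(-ε) * ∏ i, u (n i) := by
      have hcsplit : ∀ i : Fin r, nn i ^ (-c) = nn i ^ (-ε₀) * nn i ^ (-(1+ε₀)) := by
        intro i
        rw [← Real.rpow_add (hnnpos i)]
        congr 1
        rw [hcdef]; ring
      calc ∏ i, nn i ^ (-c) = ∏ i, (nn i ^ (-ε₀) * nn i ^ (-(1+ε₀))) :=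
            Finset.prod_congr rfl fun i _ => hcsplit i
        _ ≤ ∏ i, ((N:ℝ)^(-ε₀) * nn i ^ (-(1+ε₀))) := by
            refine Finset.prod_le_prod (fun i _ => mul_nonneg
              (Real.rpow_nonneg (hnnpos i).le _) (Real.rpow_nonneg (hnnpos i).le _))
              (fun i _ => ?_)
            apply mul_le_mul_of_nonneg_right _ (Real.rpow_nonneg (hnnpos i).le _)
            exact Real.rpow_le_rpow_of_nonpos hNpos (hNlenn i) (neg_nonpos.mpr hε₀.le)
        _ = ((N:ℝ)^(-ε₀))^r * ∏ i, u (n i) := by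
            rw [Finset.prod_mul_distrib, Finset.prod_const, Finset.card_univ,
              Fintype.card_fin]
        _ = (N:ℝ)^(-ε) * ∏ i, u (n i) := by
            congr 1
            rw [← Real.rpow_natCast ((N:ℝ)^(-ε₀)) r, ← Real.rpow_mul hNpos.le]
            congr 1
            rw [hεdef]; ring
    -- assemble
    calc ‖poch (s i0 - 1) (k + 1) / (Nat.factorial (k + 1) : ℂ) *
        ∏ i, z i ^ n i / (n i : ℂ) ^ (s i + if i = i0 then (k : ℂ) else 0)‖
        ≤ (∏ j ∈ Finset.range (k+1), (A + (j:ℝ))) / (Nat.factorial (k+1) : ℝ) *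
          ∏ i, nn i ^ (-(e i)) := step1
      _ = (∏ j ∈ Finset.range (k+1), (A + (j:ℝ))) / (Nat.factorial (k+1) : ℝ) *
          (nn i0 ^ (-t) * ∏ i, nn i ^ (-(f i))) := by rw [step2]
      _ ≤ (∏ j ∈ Finset.range (k+1), (A + (j:ℝ))) / (Nat.factorial (k+1) : ℝ) *
          ((1/2:ℝ)^(k - k₀) * ∏ i, nn i ^ (-(f i))) := by
            apply mul_le_mul_of_nonneg_left _ (div_nonneg hPA hfact.le)
            apply mul_le_mul_of_nonneg_right step3
            exact Finset.prod_nonneg fun i _ => Real.rpow_nonneg (hnnpos i).le _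
      _ ≤ (∏ j ∈ Finset.range (k+1), (A + (j:ℝ))) / (Nat.factorial (k+1) : ℝ) *
          ((1/2:ℝ)^(k - k₀) * ((N:ℝ)^(-ε) * ∏ i, u (n i))) := by
            apply mul_le_mul_of_nonneg_left _ (div_nonneg hPA hfact.le)
            apply mul_le_mul_of_nonneg_left (step4.trans step5) (by positivity)
      _ = (N:ℝ)^(-ε) * h p := by
            rw [hhalf2, hhdef, hbdef]
            simp only [← hndef, ← hkdef]
            ring
  -- conclusion
  constructor
  · intro N hN
    exact Summable.of_nonneg_of_le (st0 N) (key N hN) (hsh.mul_left _)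
  · refine ⟨ε, hε, ?_⟩
    rw [Asymptotics.isBigO_iff]
    refine ⟨∑' p, h p, ?_⟩
    filter_upwards [Filter.eventually_ge_atTop 2] with N hN
    have hNpos : (0:ℝ) < (N:ℝ) := by
      have : (0:ℕ) < N := by omega
      exact_mod_cast this
    have hsum := Summable.of_nonneg_of_le (st0 N) (key N hN) (hsh.mul_left _)
    rw [Real.norm_eq_abs, abs_of_nonneg (tsum_nonneg (st0 N)), Real.norm_eq_abs,
      abs_of_nonneg (Real.rpow_nonneg hNpos.le _)]
    calc ∑' p, supTerm r hr z K k₀ N p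
        ≤ ∑' p, (N:ℝ)^(-ε) * h p := Summable.tsum_le_tsum (key N hN) hsum (hsh.mul_left _)
      _ = (N:ℝ)^(-ε) * ∑' p, h p := tsum_mul_left
      _ = (∑' p, h p) * (N:ℝ)^(-ε) := mul_comm _ _
end

section
/- The limit as N → ∞ of Σ_{N>n_1>n_2>0} (−1)^{n_2}·n_2/n_1^2 exists and equals (log 2)/2 − π²/16; equivalently, Σ_{N>n_1>n_2>0} (−1)^{n_2}/(n_1^{2} n_2^{−1}) = (log 2)/2 − π²/16 + o(1) as N → ∞. -/
open Filter Topology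
open Finset

-- closed form for inner alternating sum
lemma sum_neg_pow_mul (m : ℕ) :
    ∑ k ∈ range m, (-1 : ℝ) ^ k * k = ((-1) ^ (m + 1) * (2 * m - 1) - 1) / 4 := by
  induction m with
  | zero => simp
  | succ m ih =>
    rw [Finset.sum_range_succ, ih]
    push_cast
    rw [pow_succ, pow_succ]
    ring

lemma term_eq (m : ℕ) :
    (∑ k ∈ range m, (-1 : ℝ) ^ k * k) / (m : ℝ) ^ 2 =
      1 / 2 * ((-1) ^ (m + 1) / m) - 1 / 4 * ((-1) ^ (m + 1) / (m : ℝ) ^ 2)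
        - 1 / 4 * (1 / (m : ℝ) ^ 2) := by
  rw [sum_neg_pow_mul]
  rcases eq_or_ne m 0 with rfl | hm
  · simp
  · have hm' : (m : ℝ) ≠ 0 := Nat.cast_ne_zero.mpr hm
    field_simp
    ring

lemma alt_harmonic (n : ℕ) :
    ∑ m ∈ range (n + 1), (-1 : ℝ) ^ (m + 1) / m
      = (harmonic n : ℝ) - (harmonic (n / 2) : ℝ) := by
  induction n with
  | zero => simp
  | succ n ih =>
    rw [Finset.sum_range_succ, ih, harmonic_succ]
    rcases Nat.even_or_odd n with he | ho
    · obtain ⟨k, rfl⟩ := he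
      have h2 : (k + k + 1) / 2 = (k + k) / 2 := by omega
      have he2 : Even (k + k + 1 + 1) := ⟨k + 1, by ring⟩
      have hp : (-1 : ℝ) ^ (k + k + 1 + 1) = 1 := he2.neg_one_pow
      rw [h2, hp]
      push_cast
      ring
    · obtain ⟨k, rfl⟩ := ho
      have h2 : (2 * k + 1 + 1) / 2 = (2 * k + 1) / 2 + 1 := by omega
      have h3 : (2 * k + 1) / 2 = k := by omega
      have ho2 : Odd (2 * k + 1 + 1 + 1) := ⟨k + 1, by ring⟩
      have hp : (-1 : ℝ) ^ (2 * k + 1 + 1 + 1) = -1 := ho2.neg_one_pow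
      rw [h2, h3, harmonic_succ k, hp]
      push_cast
      have hk : ((2 : ℝ) * k + 1 + 1) ≠ 0 := by positivity
      have hk1 : ((k : ℝ) + 1) ≠ 0 := by positivity
      field_simp
      ring

lemma tendsto_alt_harmonic :
    Tendsto (fun N : ℕ => ∑ m ∈ range N, (-1 : ℝ) ^ (m + 1) / m) atTop
      (𝓝 (Real.log 2)) := by
  rw [← Filter.tendsto_add_atTop_iff_nat 1]
  have key : ∀ n : ℕ, ∑ m ∈ range (n + 1), (-1 : ℝ) ^ (m + 1) / m
      = Real.eulerMascheroniSeq n - Real.eulerMascheroniSeq (n / 2)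
        + Real.log (((n : ℝ) + 1) / (((n / 2 : ℕ) : ℝ) + 1)) := by
    intro n
    rw [alt_harmonic, Real.eulerMascheroniSeq, Real.eulerMascheroniSeq,
      Real.log_div (by positivity) (by positivity)]
    ring
  simp only [key]
  have hdiv : Tendsto (fun n : ℕ => n / 2) atTop atTop :=
    Filter.tendsto_atTop_atTop.mpr fun b => ⟨2 * b, fun n hn => by omega⟩
  have hγ := Real.tendsto_eulerMascheroniSeq
  have h0 : Tendsto (fun n : ℕ => 2 / ((n : ℝ) + 2)) atTop (𝓝 0) :=
    Filter.Tendsto.div_atTop tendsto_const_nhds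
      (tendsto_atTop_add_const_right _ 2 tendsto_natCast_atTop_atTop)
  have hlow : Tendsto (fun n : ℕ => 2 - 2 / ((n : ℝ) + 2)) atTop (𝓝 2) := by
    simpa using tendsto_const_nhds.sub h0
  have hratio : Tendsto (fun n : ℕ => ((n : ℝ) + 1) / (((n / 2 : ℕ) : ℝ) + 1)) atTop (𝓝 2) := by
    refine tendsto_of_tendsto_of_tendsto_of_le_of_le hlow tendsto_const_nhds ?_ ?_
    · intro n
      dsimp only
      have hd1 : (0 : ℝ) < ((n / 2 : ℕ) : ℝ) + 1 := by positivity
      have hdle : 2 * ((n / 2 : ℕ) : ℝ) ≤ (n : ℝ) := by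
        exact_mod_cast (by omega : 2 * (n / 2) ≤ n)
      have heq : 2 - 2 / ((n : ℝ) + 2) = (2 * n + 2) / ((n : ℝ) + 2) := by
        field_simp
        ring
      rw [heq, div_le_div_iff₀ (by positivity) hd1]
      nlinarith
    · intro n
      dsimp only
      have hd1 : (0 : ℝ) < ((n / 2 : ℕ) : ℝ) + 1 := by positivity
      have hnle : (n : ℝ) ≤ 2 * ((n / 2 : ℕ) : ℝ) + 1 := by
        exact_mod_cast (by omega : n ≤ 2 * (n / 2) + 1)
      rw [div_le_iff₀ hd1]
      nlinarith
  have hlog : Tendsto (fun n : ℕ => Real.log (((n : ℝ) + 1) / (((n / 2 : ℕ) : ℝ) + 1)))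
      atTop (𝓝 (Real.log 2)) :=
    ((Real.continuousAt_log two_ne_zero).tendsto).comp hratio
  have h := (hγ.sub (hγ.comp hdiv)).add hlog
  simpa using h

lemma hasSum_alt_sq : HasSum (fun n : ℕ => (-1 : ℝ) ^ (n + 1) / (n : ℝ) ^ 2)
    (Real.pi ^ 2 / 12) := by
  have h1 : HasSum (fun n : ℕ => (1 : ℝ) / (n : ℝ) ^ 2) (Real.pi ^ 2 / 6) := hasSum_zeta_two
  have hg : HasSum (fun n : ℕ => if Even n then 2 / (n : ℝ) ^ 2 else 0) (Real.pi ^ 2 / 12) := by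
    have hinj : Function.Injective (fun n : ℕ => 2 * n) := fun a b h => by dsimp at h; omega
    have hvan : ∀ x ∉ Set.range (fun n : ℕ => 2 * n),
        (if Even x then 2 / (x : ℝ) ^ 2 else 0) = 0 := by
      intro x hx
      have hne : ¬ Even x := by
        rintro ⟨k, hk⟩
        exact hx ⟨k, by dsimp; omega⟩
      simp [hne]
    refine (hinj.hasSum_iff hvan).mp ?_
    have h2 := h1.mul_left (1 / 2)
    have hval : 1 / 2 * (Real.pi ^ 2 / 6) = Real.pi ^ 2 / 12 := by ring
    rw [hval] at h2
    convert h2 using 1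
    · rfl
    funext n
    simp only [Function.comp]
    simp only [even_two_mul, if_true]
    rcases eq_or_ne n 0 with rfl | hn
    · simp
    · have hn' : (n : ℝ) ≠ 0 := Nat.cast_ne_zero.mpr hn
      push_cast
      field_simp
  have h3 := h1.sub hg
  have hval : Real.pi ^ 2 / 6 - Real.pi ^ 2 / 12 = Real.pi ^ 2 / 12 := by ring
  rw [hval] at h3
  convert h3 using 1
  · rfl
  funext n
  rcases Nat.even_or_odd n with he | ho
  · rw [if_pos he, he.add_one.neg_one_pow]
    ring
  · rw [if_neg (Nat.not_even_iff_odd.mpr ho), ho.add_one.neg_one_pow]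
    ring

/-- `lim_{N→∞} Σ_{N>n₁>n₂>0} (−1)^{n₂}·n₂/n₁² = (log 2)/2 − π²/16`. -/
theorem alternating_double_sum_value :
    Tendsto
      (fun N : ℕ =>
        ∑ n₁ ∈ Finset.range N, ∑ n₂ ∈ Finset.range n₁,
          (-1 : ℝ) ^ n₂ * n₂ / (n₁ : ℝ) ^ 2)
      atTop (𝓝 (Real.log 2 / 2 - Real.pi ^ 2 / 16)) := by
  have hA := tendsto_alt_harmonic
  have hB := hasSum_alt_sq.tendsto_sum_nat
  have hC := hasSum_zeta_two.tendsto_sum_nat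
  have h := ((hA.const_mul (1 / 2 : ℝ)).sub (hB.const_mul (1 / 4 : ℝ))).sub
    (hC.const_mul (1 / 4 : ℝ))
  have hval : Real.log 2 / 2 - Real.pi ^ 2 / 16
      = 1 / 2 * Real.log 2 - 1 / 4 * (Real.pi ^ 2 / 12) - 1 / 4 * (Real.pi ^ 2 / 6) := by
    ring
  rw [hval]
  refine h.congr fun N => ?_
  rw [Finset.mul_sum, Finset.mul_sum, Finset.mul_sum, ← Finset.sum_sub_distrib,
    ← Finset.sum_sub_distrib]
  refine Finset.sum_congr rfl fun m _ => ?_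
  rw [← Finset.sum_div, term_eq]
end

section
/- As N → ∞, Σ_{N>n_1>n_2>0} (−1)^{n_2}·n_2/n_1 = −(log N)/4 + (−1)^N/4 + (1 − log 2 − γ)/4 + o(1), where γ is the Euler–Mascheroni constant. -/
open Filter Topology Finset

private lemma innerSumEval (m : ℕ) :
    ∑ k ∈ Finset.range m, (-1 : ℝ) ^ k * k =
      (2 * (-1 : ℝ) ^ (m + 1) * m + (-1) ^ m - 1) / 4 := by
  induction m with
  | zero => simp
  | succ n ih =>
    rw [Finset.sum_range_succ, ih]
    push_cast
    simp [pow_succ]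
    ring

private lemma keyId (N : ℕ) (hN : 1 ≤ N) :
    (∑ n₁ ∈ Finset.range N, ∑ n₂ ∈ Finset.range n₁, (-1 : ℝ) ^ n₂ * n₂ / (n₁ : ℝ)) =
      (1 + (-1:ℝ)^N)/4 + (∑ m ∈ Finset.Ico 1 N, (-1:ℝ)^m / m)/4
        - (∑ m ∈ Finset.Ico 1 N, (1:ℝ)/m)/4 := by
  have step1 : ∀ n₁ : ℕ, ∑ n₂ ∈ Finset.range n₁, (-1 : ℝ) ^ n₂ * n₂ / (n₁ : ℝ)
      = (2 * (-1 : ℝ) ^ (n₁ + 1) * n₁ + (-1) ^ n₁ - 1) / 4 / n₁ := by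
    intro n₁
    rw [← Finset.sum_div, innerSumEval]
  simp_rw [step1]
  rw [Finset.range_eq_Ico, Finset.sum_eq_sum_Ico_succ_bot (by omega : 0 < N)]
  have step2 : ∀ m ∈ Finset.Ico 1 N,
      (2 * (-1 : ℝ) ^ (m + 1) * m + (-1) ^ m - 1) / 4 / m
        = -((-1:ℝ)^m)/2 + ((-1:ℝ)^m / m)/4 - ((1:ℝ)/m)/4 := by
    intro m hm
    have hm1 : (1:ℕ) ≤ m := (Finset.mem_Ico.mp hm).1
    have hm0 : (m : ℝ) ≠ 0 := by positivity
    rw [pow_succ]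
    field_simp
    ring
  rw [Finset.sum_congr rfl step2]
  have hgeo : ∑ m ∈ Finset.Ico 1 N, (-1:ℝ)^m = -(1+(-1:ℝ)^N)/2 := by
    have h := geom_sum_eq (show (-1:ℝ) ≠ 1 by norm_num) N
    rw [Finset.range_eq_Ico, Finset.sum_eq_sum_Ico_succ_bot (by omega : 0 < N)] at h
    simp only [pow_zero] at h
    have h' : (1:ℝ) + ∑ m ∈ Finset.Ico 1 N, (-1:ℝ)^m = ((-1:ℝ)^N - 1)/(-1 - 1) := h
    norm_num at h'
    linarith [h']
  have e1 : ∀ m ∈ Finset.Ico 1 N, -((-1:ℝ)^m)/2 + ((-1:ℝ)^m / m)/4 - ((1:ℝ)/m)/4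
      = (-((-1:ℝ)^m)/2 + ((-1:ℝ)^m / m)/4) - ((1:ℝ)/m)/4 := fun m _ => by ring
  rw [Finset.sum_congr rfl e1]
  simp only [Finset.sum_sub_distrib, Finset.sum_add_distrib, neg_div, Finset.sum_neg_distrib,
    ← Finset.sum_div, hgeo]
  norm_num
  ring

private lemma altPair (m : ℕ) :
    (∑ n ∈ Finset.Ico 1 (2*m+1), (-1:ℝ)^n / n =
      ∑ n ∈ Finset.Ico 1 (m+1), (1:ℝ)/n - ∑ n ∈ Finset.Ico 1 (2*m+1), (1:ℝ)/n)
    ∧ (∑ n ∈ Finset.Ico 1 (2*m+2), (-1:ℝ)^n / n =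
      ∑ n ∈ Finset.Ico 1 (m+1), (1:ℝ)/n - ∑ n ∈ Finset.Ico 1 (2*m+2), (1:ℝ)/n) := by
  induction m with
  | zero => norm_num
  | succ k ih =>
    obtain ⟨ih1, ih2⟩ := ih
    have hk : ((2*k+2 : ℕ) : ℝ) ≠ 0 := by positivity
    have hk1 : ((k+1 : ℕ) : ℝ) ≠ 0 := by positivity
    have hpow : ((-1:ℝ))^(2*k+2) = 1 := by simp [pow_add, pow_mul]
    have h1 : ∑ n ∈ Finset.Ico 1 (2*(k+1)+1), (-1:ℝ)^n / n =
        ∑ n ∈ Finset.Ico 1 (k+1+1), (1:ℝ)/n - ∑ n ∈ Finset.Ico 1 (2*(k+1)+1), (1:ℝ)/n := by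
      have e1 : 2*(k+1)+1 = (2*k+2)+1 := by ring
      rw [e1, Finset.sum_Ico_succ_top (show (1:ℕ) ≤ 2*k+2 by omega)
            (f := fun n : ℕ => (-1:ℝ)^n / n), ih2,
          Finset.sum_Ico_succ_top (show (1:ℕ) ≤ k+1 by omega) (f := fun n : ℕ => (1:ℝ)/n),
          Finset.sum_Ico_succ_top (show (1:ℕ) ≤ 2*k+2 by omega) (f := fun n : ℕ => (1:ℝ)/n),
          hpow]
      push_cast
      field_simp
      ring
    refine ⟨h1, ?_⟩
    have hpow3 : ((-1:ℝ))^(2*k+3) = -1 := by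
      rw [pow_succ, hpow]; norm_num
    have e2 : 2*(k+1)+2 = (2*k+3)+1 := by ring
    have e3 : 2*(k+1)+1 = 2*k+3 := by ring
    rw [e2, Finset.sum_Ico_succ_top (show (1:ℕ) ≤ 2*k+3 by omega)
          (f := fun n : ℕ => (-1:ℝ)^n / n),
        Finset.sum_Ico_succ_top (show (1:ℕ) ≤ 2*k+3 by omega) (f := fun n : ℕ => (1:ℝ)/n),
        ← e3, h1, e3, hpow3]
    ring

private lemma altEq (N : ℕ) (hN : 1 ≤ N) :
    ∑ n ∈ Finset.Ico 1 N, (-1:ℝ)^n / n =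
      ∑ n ∈ Finset.Ico 1 ((N-1)/2 + 1), (1:ℝ)/n - ∑ n ∈ Finset.Ico 1 N, (1:ℝ)/n := by
  rcases Nat.even_or_odd N with ⟨m, hm⟩ | ⟨m, hm⟩
  · have hm' : N = 2*m := by omega
    have hm1 : 1 ≤ m := by omega
    obtain ⟨m', rfl⟩ : ∃ m', m = m' + 1 := ⟨m - 1, by omega⟩
    have e : N = 2*m'+2 := by omega
    have e2 : (N-1)/2 + 1 = m' + 1 := by omega
    rw [e2, e]
    exact (altPair m').2
  · have e : N = 2*m+1 := by omega
    have e2 : (N-1)/2 + 1 = m + 1 := by omega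
    rw [e2, e]
    exact (altPair m).1


/-- as `N → ∞`,
`Σ_{N>n₁>n₂>0} (−1)^{n₂}·n₂/n₁ = −(log N)/4 + (−1)^N/4 + (1 − log 2 − γ)/4 + o(1)`,
where `γ` is the Euler–Mascheroni constant (characterised by the hypothesis `hγ`). -/
theorem alternating_double_sum_asymptotics
    (γ : ℝ)
    (hγ : Tendsto (fun N : ℕ => (∑ n ∈ Finset.Ico 1 N, (1 : ℝ) / n) - Real.log N)
      atTop (𝓝 γ)) :
    Tendsto
      (fun N : ℕ =>
        (∑ n₁ ∈ Finset.range N, ∑ n₂ ∈ Finset.range n₁,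
            (-1 : ℝ) ^ n₂ * n₂ / (n₁ : ℝ)) -
          (-(Real.log N) / 4 + (-1 : ℝ) ^ N / 4 + (1 - Real.log 2 - γ) / 4))
      atTop (𝓝 0) := by
  set h : ℕ → ℝ := fun N => (∑ n ∈ Finset.Ico 1 N, (1 : ℝ) / n) - Real.log N with hh
  set M : ℕ → ℕ := fun N => (N-1)/2 + 1 with hM
  have hMtop : Tendsto M atTop atTop :=
    tendsto_atTop_atTop.mpr fun b => ⟨2*b, fun n hn => by simp only [hM]; omega⟩
  have hhM : Tendsto (fun N => h (M N)) atTop (𝓝 γ) := hγ.comp hMtop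
  have hlog : Tendsto (fun N : ℕ => Real.log (2 * (M N : ℝ)) - Real.log N) atTop (𝓝 0) := by
    apply tendsto_of_tendsto_of_tendsto_of_le_of_le' tendsto_const_nhds
      Real.tendsto_log_nat_add_one_sub_log
    · filter_upwards [eventually_ge_atTop 1] with N hN
      have h1 : (N : ℝ) ≤ 2 * (M N : ℝ) := by
        have : N ≤ 2 * M N := by simp only [hM]; omega
        exact_mod_cast Nat.cast_le.mpr this |>.trans_eq (by push_cast; ring)
      have h0 : (0:ℝ) < N := by exact_mod_cast hN
      have := Real.log_le_log h0 h1
      linarith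
    · filter_upwards [eventually_ge_atTop 1] with N hN
      have h1 : 2 * (M N : ℝ) ≤ (N : ℝ) + 1 := by
        have : 2 * M N ≤ N + 1 := by simp only [hM]; omega
        calc 2 * (M N : ℝ) = ((2 * M N : ℕ) : ℝ) := by push_cast; ring
          _ ≤ ((N + 1 : ℕ) : ℝ) := by exact_mod_cast this
          _ = (N : ℝ) + 1 := by push_cast; ring
      have h0 : (0:ℝ) < 2 * (M N : ℝ) := by
        have : 1 ≤ M N := Nat.le_add_left 1 _
        have : (1:ℝ) ≤ (M N : ℝ) := by exact_mod_cast this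
        linarith
      have := Real.log_le_log h0 h1
      linarith
  have key : Tendsto (fun N : ℕ =>
      (h (M N) - h N)/4 - (h N - γ)/4 + (Real.log (2 * (M N : ℝ)) - Real.log N)/4)
      atTop (𝓝 0) := by
    have t1 := ((hhM.sub hγ).div_const 4).sub ((hγ.sub (tendsto_const_nhds : Tendsto (fun _ : ℕ => γ) atTop (𝓝 γ))).div_const 4)
    have t2 := t1.add (hlog.div_const 4)
    simpa using t2
  apply key.congr'
  filter_upwards [eventually_ge_atTop 1] with N hN
  have hMN1 : (1:ℝ) ≤ (M N : ℝ) := by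
    have : 1 ≤ M N := Nat.le_add_left 1 _
    exact_mod_cast this
  have hlogmul : Real.log (2 * (M N : ℝ)) = Real.log 2 + Real.log (M N : ℝ) :=
    Real.log_mul two_ne_zero (by linarith)
  rw [keyId N hN]
  rw [altEq N hN]
  simp only [hh, hM]
  rw [hlogmul]
  ring
end
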